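/- Let 𝒫_do = {P_do(i)}_{i∈V} be a quantifiable interventional family with underlying distribution P and directed ancestral causal graph G(𝒫_do). For i ∈ cause(k): i ⊥_{P_do(i)} k | cause(k)\{i} if and only if i ⊥_P k | cause(k)\{i}. -/

import Mathlib

open MeasureTheory ProbabilityTheory

namespace CausalAxioms

/-! ### Mixed graphs (arrows and arcs) -/

structure MixedGraph (V : Type) where
  arrow : V → V → Prop
  arc : V → V → Prop

namespace MixedGraph

variable {V : Type} (G : MixedGraph V)

/-- Two nodes are adjacent if they are joined by an arrow (in either direction) or an arc. -/
def Adj (i j : V) : Prop :=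
  G.arrow i j ∨ G.arrow j i ∨ G.arc i j ∨ G.arc j i

/-- A bowless directed mixed graph: arcs are symmetric, there are no self-loops, and no pair of
nodes is joined by both an arrow and an arc (no bows). -/
def IsBDMG : Prop :=
  (∀ i j, G.arc i j → G.arc j i) ∧ (∀ i, ¬ G.arc i i) ∧ (∀ i, ¬ G.arrow i i) ∧
    ∀ i j, G.arc i j → ¬ G.arrow i j ∧ ¬ G.arrow j i

/-- The set of ancestors of `j`: nodes with a directed path to `j` (excluding `j` itself). -/
def anc (j : V) : Set V := {i | i ≠ j ∧ Relation.TransGen G.arrow i j}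

/-- Ancestors of a set `A`: `an(A) = (⋃ j ∈ A, an(j)) \ A`. -/
def ancSet (A : Set V) : Set V := (⋃ j ∈ A, G.anc j) \ A

/-- The strongly connected component of `i`. -/
def sc (i : V) : Set V :=
  {j | j = i ∨ (Relation.TransGen G.arrow i j ∧ Relation.TransGen G.arrow j i)}

/-- Parents of `i`. -/
def pa (i : V) : Set V := {j | G.arrow j i}

/-- `pa({i,j}) = (pa(i) ∪ pa(j)) \ {i,j}`. -/
def paPair (i j : V) : Set V := (G.pa i ∪ G.pa j) \ {i, j}

/-- No directed cycles. -/
def Acyclic : Prop := ∀ i, ¬ Relation.TransGen G.arrow i i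

/-- A directed ancestral graph: a BDMG with no directed cycles and no arc `i ↔ j`
with `i ∈ an(j)`. -/
def DirectedAncestral : Prop :=
  G.IsBDMG ∧ G.Acyclic ∧ ∀ i j, G.arc i j → i ∉ G.anc j

/-- The acyclification of a directed mixed graph. -/
def acy : MixedGraph V where
  arrow j i := (∃ k ∈ G.sc i, G.arrow j k) ∧ j ∉ G.sc i
  arc i j := i ≠ j ∧ ∃ i' ∈ G.sc i, ∃ j' ∈ G.sc j, i' = j' ∨ G.arc i' j'

end MixedGraph

/-- A direction/type for an edge along a path: a forward arrow, a backward arrow, or an arc. -/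
inductive EDir : Type
  | fwd | bwd | biarc

/-- `G.IsEdgeDir d a b` : the graph has an edge of type `d` between `a` and `b`. -/
def MixedGraph.IsEdgeDir {V : Type} (G : MixedGraph V) : EDir → V → V → Prop
  | .fwd, a, b => G.arrow a b
  | .bwd, a, b => G.arrow b a
  | .biarc, a, b => G.arc a b ∨ G.arc b a

/-- A path in a mixed graph, recorded by its node sequence `v 0, …, v n` and the type of
each edge; all nodes are distinct. -/
structure PathIn {V : Type} (G : MixedGraph V) where
  n : ℕ
  v : ℕ → V
  e : ℕ → EDir
  one_le : 1 ≤ n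
  edge : ∀ r, r < n → G.IsEdgeDir (e r) (v r) (v (r + 1))
  inj : ∀ r, r ≤ n → ∀ s, s ≤ n → v r = v s → r = s

namespace PathIn

variable {V : Type} {G : MixedGraph V} (p : PathIn G)

/-- Edge `r` has an arrowhead at its right endpoint `v (r+1)`. -/
def headRight (r : ℕ) : Prop := p.e r = EDir.fwd ∨ p.e r = EDir.biarc

/-- Edge `r` has an arrowhead at its left endpoint `v r`. -/
def headLeft (r : ℕ) : Prop := p.e r = EDir.bwd ∨ p.e r = EDir.biarc

/-- The inner node `v r` (for `1 ≤ r ≤ n-1`) is a collider. -/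
def Collider (r : ℕ) : Prop := p.headRight (r - 1) ∧ p.headLeft r

/-- The path is σ-connecting given `C`. -/
def SigmaConnecting (C : Set V) : Prop :=
  ∀ r, 1 ≤ r → r < p.n →
    (p.Collider r → p.v r ∈ C ∪ G.ancSet C) ∧
    (¬ p.Collider r →
      p.v r ∉ C ∨
        ((p.headLeft (r - 1) → p.v (r - 1) ∈ G.sc (p.v r)) ∧
          (p.headRight r → p.v (r + 1) ∈ G.sc (p.v r))))

/-- The path is m-connecting given `C`. -/
def MConnecting (C : Set V) : Prop :=
  ∀ r, 1 ≤ r → r < p.n →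
    (p.Collider r → p.v r ∈ C ∪ G.ancSet C) ∧ (¬ p.Collider r → p.v r ∉ C)

end PathIn

/-- σ-separation of `A` and `B` given `C`. -/
def SigmaSep {V : Type} (G : MixedGraph V) (A B C : Set V) : Prop :=
  ¬ ∃ p : PathIn G, p.v 0 ∈ A ∧ p.v p.n ∈ B ∧ p.SigmaConnecting C

/-- m-separation of `A` and `B` given `C`. -/
def MSep {V : Type} (G : MixedGraph V) (A B C : Set V) : Prop :=
  ¬ ∃ p : PathIn G, p.v 0 ∈ A ∧ p.v p.n ∈ B ∧ p.MConnecting C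

/-- A separable pair: a non-adjacent pair that can be σ-separated by some set. -/
def SeparablePair {V : Type} (G : MixedGraph V) (i j : V) : Prop :=
  ¬ G.Adj i j ∧ ∃ C : Set V, i ∉ C ∧ j ∉ C ∧ SigmaSep G {i} {j} C

/-- A separable pair in the m-separation sense. -/
def MSeparablePair {V : Type} (G : MixedGraph V) (i j : V) : Prop :=
  ¬ G.Adj i j ∧ ∃ C : Set V, i ∉ C ∧ j ∉ C ∧ MSep G {i} {j} C

/-- A graph is maximal if every non-adjacent pair is separable. -/
def MaximalGraph {V : Type} (G : MixedGraph V) : Prop :=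
  ∀ i j, i ≠ j → ¬ G.Adj i j → SeparablePair G i j

/-- Two graphs are Markov equivalent if they induce the same σ-separations. -/
def MarkovEquiv {V : Type} (G₁ G₂ : MixedGraph V) : Prop :=
  ∀ A B C : Set V, SigmaSep G₁ A B C ↔ SigmaSep G₂ A B C

/-- A primitive inducing path (PIP): a path with at least 3 nodes, all of whose edges are arcs or
arrows within a strongly connected component (except that the first edge may be `i → q₁` and the
last may be `q_r ← j`), and all of whose inner nodes are ancestors of one of the endpoints. -/
def IsPIP {V : Type} (G : MixedGraph V) (p : PathIn G) : Prop :=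
  2 ≤ p.n ∧
    (∀ r, r < p.n →
      p.e r = EDir.biarc ∨ p.v r ∈ G.sc (p.v (r + 1)) ∨
        (r = 0 ∧ p.e r = EDir.fwd) ∨ (r + 1 = p.n ∧ p.e r = EDir.bwd)) ∧
    ∀ r, 1 ≤ r → r < p.n → p.v r ∈ G.ancSet {p.v 0, p.v p.n}

/-! ### Conditional independence for coordinates of a product space -/

variable {V : Type} {X : V → Type} [∀ i, MeasurableSpace (X i)]

/-- The σ-algebra on `∀ i, X i` generated by the coordinates in `A`. -/
def coordσ (X : V → Type) [∀ i, MeasurableSpace (X i)] (A : Set V) :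
    MeasurableSpace (∀ i, X i) :=
  MeasurableSpace.comap (A.restrict) MeasurableSpace.pi

/-- `CI P A B C` : the coordinates in `A` are conditionally independent of the coordinates in
`B` given the coordinates in `C`, under the measure `P`. -/
def CI (P : Measure (∀ i, X i)) (A B C : Set V) : Prop :=
  ∀ s t : Set (∀ i, X i),
    MeasurableSet[coordσ X A] s → MeasurableSet[coordσ X B] t →
      (P⟦s ∩ t | coordσ X C⟧) =ᵐ[P] (P⟦s | coordσ X C⟧) * (P⟦t | coordσ X C⟧)

/-- The intersection property. -/
def IntersectionProp (P : Measure (∀ i, X i)) : Prop :=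
  ∀ A B C D : Set V, Disjoint A B → Disjoint A C → Disjoint A D → Disjoint B C →
    Disjoint B D → Disjoint C D →
    CI P A B (C ∪ D) → CI P A D (C ∪ B) → CI P A (B ∪ D) C

/-- The composition property. -/
def CompositionProp (P : Measure (∀ i, X i)) : Prop :=
  ∀ A B C D : Set V, Disjoint A B → Disjoint A C → Disjoint A D → Disjoint B C →
    Disjoint B D → Disjoint C D →
    CI P A B C → CI P A D C → CI P A (B ∪ D) C

/-- Singleton-transitivity. -/
def SingletonTransProp (P : Measure (∀ i, X i)) : Prop :=
  ∀ i j k : V, ∀ C : Set V, i ≠ j → i ≠ k → j ≠ k → i ∉ C → j ∉ C → k ∉ C →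
    CI P {i} {j} C → CI P {i} {j} (C ∪ {k}) →
      CI P {i} {k} C ∨ CI P {j} {k} C

/-- The global Markov property with respect to σ-separation. -/
def GlobalMarkovSigma (G : MixedGraph V) (P : Measure (∀ i, X i)) : Prop :=
  ∀ A B C : Set V, Disjoint A B → Disjoint A C → Disjoint B C →
    SigmaSep G A B C → CI P A B C

/-- The pairwise Markov property: `i ⊥ j | an({i,j})` for every non-adjacent pair. -/
def PairwiseMarkov (G : MixedGraph V) (P : Measure (∀ i, X i)) : Prop :=
  ∀ i j : V, i ≠ j → ¬ G.Adj i j → CI P {i} {j} (G.ancSet {i, j})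

/-- The converse pairwise Markov property: every edge yields a conditional dependence. -/
def ConversePairwiseMarkov (G : MixedGraph V) (P : Measure (∀ i, X i)) : Prop :=
  ∀ i j : V, i ≠ j → G.Adj i j → ¬ CI P {i} {j} (G.ancSet {i, j})

/-! ### Interventional families -/

variable (Pdo : V → Measure (∀ i, X i))

/-- The set of causes of `k`. -/
def cause (k : V) : Set V := {i | i ≠ k ∧ ¬ CI (Pdo i) {i} {k} ∅}

/-- The set of effects of `i`. -/
def effect (i : V) : Set V := {k | k ≠ i ∧ i ∈ cause Pdo k}

/-- `cause(A) = (⋃ k ∈ A, cause(k)) \ A`. -/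
def causeSet (A : Set V) : Set V := (⋃ k ∈ A, cause Pdo k) \ A

/-- The causal cycle containing `i`. -/
def cc (i : V) : Set V := {k | k = i ∨ (k ∈ cause Pdo i ∧ i ∈ cause Pdo k)}

/-- A transitive interventional family. -/
def TransitiveFam : Prop :=
  ∀ i j k : V, i ≠ j → j ≠ k → i ≠ k →
    i ∈ cause Pdo j → j ∈ cause Pdo k → i ∈ cause Pdo k

/-- Given a candidate direct-cause assignment `dc`, the `i`-intervened causes of `k`:
the ancestors of `k` in the graph with arrows `a → b` iff `a ∈ dc b`, with all arrows
pointing to `i` removed. -/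
def iotaFrom (dc : V → Set V) (i k : V) : Set V :=
  MixedGraph.anc ⟨fun a b => a ∈ dc b ∧ b ≠ i, fun _ _ => False⟩ k

/-- The first step of the iterative procedure defining direct causes. -/
def dcInit : V → Set V := fun k =>
  {i ∈ cause Pdo k | ¬ CI (Pdo i) {i} {k} (cause Pdo k \ {i})}

/-- One step of the iterative procedure defining direct causes. -/
def dcStep (dc : V → Set V) : V → Set V := fun k =>
  {i ∈ dc k | ¬ CI (Pdo i) {i} {k} (iotaFrom dc i k \ {i})}

/-- The set of direct causes of each node, obtained by iterating the procedure to its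
fixed point (reached after at most `|V|²` steps). -/
def dcause [Fintype V] : V → Set V :=
  (dcStep Pdo)^[Fintype.card V * Fintype.card V] (dcInit Pdo)

/-- The set of intervened causes of `k` after intervention on `i`. -/
def iotaCause [Fintype V] (i k : V) : Set V := iotaFrom (dcause Pdo) i k

/-- `ιcause_i(A) = (⋃ k ∈ A, ιcause_i(k)) \ A`. -/
def iotaCauseSet [Fintype V] (i : V) (A : Set V) : Set V :=
  (⋃ k ∈ A, iotaCause Pdo i k) \ A

/-- The causal structure `S(𝒫_do)`. -/
def Sgraph [Fintype V] : MixedGraph V :=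
  ⟨fun a b => a ∈ dcause Pdo b, fun _ _ => False⟩

/-- The `i`-intervened causal structure `S_i(𝒫_do)`. -/
def Sigraph [Fintype V] (i : V) : MixedGraph V :=
  ⟨fun a b => a ∈ dcause Pdo b ∧ b ≠ i, fun _ _ => False⟩

/-- The condition for placing an arc between `j` and `k` in the `i`-intervened graph. -/
def GiArcCond [Fintype V] (i j k : V) : Prop :=
  j ≠ i ∧ k ≠ i ∧ j ≠ k ∧ j ∉ dcause Pdo k ∧ k ∉ dcause Pdo j ∧
    ¬ CI (Pdo i) {j} {k} (iotaCauseSet Pdo i {j, k})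

/-- The `i`-intervened graph `G_i(𝒫_do)`. -/
def Gi [Fintype V] (i : V) : MixedGraph V where
  arrow a b := a ∈ dcause Pdo b ∧ b ≠ i
  arc j k := GiArcCond Pdo i j k ∨ GiArcCond Pdo i k j

/-- The condition for placing an arc between `j` and `k` in the causal graph. -/
def GcArcCond [Fintype V] (j k : V) : Prop :=
  j ≠ k ∧ j ∉ dcause Pdo k ∧ k ∉ dcause Pdo j ∧
    ∀ i, i ≠ j → i ≠ k → (Gi Pdo i).arc j k

/-- The causal graph `G(𝒫_do)`. -/
def Gcausal [Fintype V] : MixedGraph V where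
  arrow a b := a ∈ dcause Pdo b
  arc j k := GcArcCond Pdo j k ∨ GcArcCond Pdo k j

/-- An observable interventional family (Axiom 2). -/
def Observable [Fintype V] (P : Measure (∀ i, X i)) : Prop :=
  (∀ j k : V, SeparablePair (Gcausal Pdo) j k → ∀ i, i ≠ j → i ≠ k →
      CI (Pdo i) {j} {k} (iotaCauseSet Pdo i {j, k}) →
        CI P {j} {k} (causeSet Pdo {j, k})) ∧
  ∀ k, ∀ i ∈ cause Pdo k,
      CI (Pdo i) {i} {k} (iotaCauseSet Pdo i {i, k}) →
        CI P {i} {k} (causeSet Pdo {i, k})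

/-- A strongly observable interventional family (Axioms 2 and 3). -/
def StronglyObservable [Fintype V] (P : Measure (∀ i, X i)) : Prop :=
  Observable Pdo P ∧
  (∀ i j k : V, i ≠ j → i ≠ k → j ≠ k →
      CI P {j} {k} (causeSet Pdo {j, k}) →
        CI (Pdo i) {j} {k} (iotaCauseSet Pdo i {j, k})) ∧
  ∀ k, ∀ i ∈ cause Pdo k,
      CI P {i} {k} (causeSet Pdo {i, k}) →
        CI (Pdo i) {i} {k} (iotaCauseSet Pdo i {i, k})

/-! ### Quantifiable interventional families -/

/-- `κ` is a regular conditional probability for `P` given the coordinates in `C`. -/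
def IsRCP (P : Measure (∀ i, X i)) (C : Set V)
    (κ : Kernel (∀ j : C, X j) (∀ i, X i)) : Prop :=
  IsMarkovKernel κ ∧
    ∀ F : Set (∀ i, X i), MeasurableSet F →
      ∀ S : Set (∀ j : C, X j), MeasurableSet S →
        P (F ∩ C.restrict ⁻¹' S) = ∫⁻ y in S, κ y F ∂(P.map C.restrict)

/-- Two measures are equivalent if they have the same null sets. -/
def MeasEquiv {α : Type} [MeasurableSpace α] (μ ν : Measure α) : Prop :=
  μ ≪ ν ∧ ν ≪ μ

/-- `{𝒫_do, P}` is compatible: for all distinct `i,k`, the marginal of `P_do(i)` on the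
coordinates `cause(k) ∪ {k}` is equivalent to the corresponding marginal of `P`. -/
def Compatible (P : Measure (∀ i, X i)) : Prop :=
  ∀ i k : V, i ≠ k →
    MeasEquiv ((Pdo i).map (insert k (cause Pdo k)).restrict)
      (P.map (insert k (cause Pdo k)).restrict)

/-- A quantifiable interventional family (Axiom 4). -/
def Quantifiable (P : Measure (∀ i, X i)) : Prop :=
  Compatible Pdo P ∧
    ∀ i k : V, i ≠ k →
      ∃ κ₁ : Kernel (∀ j : (insert i (cause Pdo k) : Set V), X j) (∀ i, X i),
      ∃ κ₂ : Kernel (∀ j : (cause Pdo k : Set V), X j) (∀ i, X i),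
        IsRCP (Pdo i) (insert i (cause Pdo k)) κ₁ ∧
        IsRCP P (cause Pdo k) κ₂ ∧
        ∀ x, ((κ₁ x).map fun y => y k) =
          ((κ₂ (Set.restrict₂ (Set.subset_insert i (cause Pdo k)) x)).map fun y => y k)

/-- A bivariate-quantifiable interventional family (Axioms 4 and 5). -/
def BivQuantifiable (P : Measure (∀ i, X i)) : Prop :=
  Quantifiable Pdo P ∧
    ∀ i j k : V, i ≠ j → i ≠ k → j ≠ k → j ∉ cause Pdo k → k ∉ cause Pdo j →
      ∃ κ₁ : Kernel (∀ l : (insert i (causeSet Pdo {j, k}) : Set V), X l) (∀ i, X i),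
      ∃ κ₂ : Kernel (∀ l : (causeSet Pdo {j, k} : Set V), X l) (∀ i, X i),
        IsRCP (Pdo i) (insert i (causeSet Pdo {j, k})) κ₁ ∧
        IsRCP P (causeSet Pdo {j, k}) κ₂ ∧
        ∀ x, ((κ₁ x).map fun y => (y j, y k)) =
          ((κ₂ (Set.restrict₂ (Set.subset_insert i (causeSet Pdo {j, k})) x)).map
            fun y => (y j, y k))

/-! ### Structural causal models -/

/-- A structural causal model together with its standard single-node interventions. -/
structure SCM (V : Type) (X : V → Type) [∀ i, MeasurableSpace (X i)]
    (Ω : Type) [MeasurableSpace Ω] (E : V → Type) [∀ i, MeasurableSpace (E i)] where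
  /-- the associated graph -/
  G : MixedGraph V
  /-- the underlying probability measure -/
  μ : Measure Ω
  prob : IsProbabilityMeasure μ
  /-- the noise variables -/
  ε : ∀ i, Ω → E i
  ε_meas : ∀ i, Measurable (ε i)
  /-- the structural assignments -/
  φ : ∀ i, (∀ j : (G.pa i : Set V), X j) → E i → X i
  /-- the solution of the system of structural equations -/
  sol : Ω → ∀ i, X i
  sol_meas : Measurable sol
  sol_eq : ∀ ω i, sol ω i = φ i ((G.pa i).restrict (sol ω)) (ε i ω)
  /-- noise vectors on disjoint sets `A`, `B` are independent iff no arc joins `A` and `B` -/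
  noise_indep : ∀ A B : Set V, Disjoint A B →
    (IndepFun (fun ω => fun a : A => ε a ω) (fun ω => fun b : B => ε b ω) μ ↔
      ¬ ∃ a ∈ A, ∃ b ∈ B, G.arc a b ∨ G.arc b a)
  /-- the intervention variables `X̃_i` -/
  tilde : ∀ i, Ω → X i
  tilde_meas : ∀ i, Measurable (tilde i)
  /-- `X̃_i` is distributed as `X_i` -/
  tilde_law : ∀ i, μ.map (tilde i) = μ.map fun ω => sol ω i
  /-- `X̃_i` is independent of all the noises -/
  tilde_indep : ∀ i, IndepFun (tilde i) (fun ω => fun j : V => ε j ω) μ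
  /-- the solution of the intervened system of structural equations -/
  isol : ∀ i, Ω → ∀ j, X j
  isol_meas : ∀ i, Measurable (isol i)
  isol_self : ∀ i ω, isol i ω i = tilde i ω
  isol_eq : ∀ i j, j ≠ i → ∀ ω, isol i ω j = φ j ((G.pa j).restrict (isol i ω)) (ε j ω)

variable {Ω : Type} [MeasurableSpace Ω] {E : V → Type} [∀ i, MeasurableSpace (E i)]

/-- The family of standard-intervention distributions `𝒫_do(𝒞)`. -/
noncomputable def SCM.pdo (M : SCM V X Ω E) : V → Measure (∀ i, X i) :=
  fun i => M.μ.map (M.isol i)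

/-- The joint (observational) distribution `P_𝒞` of the SCM. -/
noncomputable def SCM.law (M : SCM V X Ω E) : Measure (∀ i, X i) := M.μ.map M.sol

instance (M : SCM V X Ω E) (i : V) : IsProbabilityMeasure (M.pdo i) := by
  haveI := M.prob
  exact Measure.isProbabilityMeasure_map (M.isol_meas i).aemeasurable

instance (M : SCM V X Ω E) : IsProbabilityMeasure M.law := by
  haveI := M.prob
  exact Measure.isProbabilityMeasure_map M.sol_meas.aemeasurable

/-- The edge-cause condition: every arrow `i → j` of the SCM graph makes `i` a direct cause
of `j` for the interventional family. -/
def SCM.EdgeCause [Fintype V] (M : SCM V X Ω E) : Prop :=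
  ∀ i j, M.G.arrow i j → i ∈ dcause M.pdo j

/-! ### Auxiliary lemmas for Statement 14 -/

section Stmt14Aux

lemma coordσ_eq_biSup (A : Set V) :
    coordσ X A = ⨆ j ∈ A, MeasurableSpace.comap (fun x : ∀ i, X i => x j) inferInstance := by
  rw [coordσ, MeasurableSpace.pi, MeasurableSpace.comap_iSup, iSup_subtype']
  simp only [MeasurableSpace.comap_comp]
  rfl

lemma coordσ_le_pi (A : Set V) : coordσ X A ≤ MeasurableSpace.pi :=
  measurable_iff_comap_le.mp (Set.measurable_restrict A)

lemma measurable_restrict_coordσ (A : Set V) :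
    Measurable[coordσ X A] (A.restrict (π := X)) :=
  measurable_iff_comap_le.mpr le_rfl

lemma coordσ_mono {A B : Set V} (h : A ⊆ B) : coordσ X A ≤ coordσ X B := by
  rw [coordσ_eq_biSup, coordσ_eq_biSup]
  exact biSup_mono h

lemma coordσ_union (A B : Set V) : coordσ X (A ∪ B) = coordσ X A ⊔ coordσ X B := by
  simp only [coordσ_eq_biSup]
  exact iSup_union

lemma coordσ_singleton (k : V) :
    coordσ X {k} = MeasurableSpace.comap (fun x : ∀ i, X i => x k) inferInstance := by
  rw [coordσ_eq_biSup]
  exact iSup_singleton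

/-- A regular conditional probability computes the conditional expectation of indicators. -/
lemma condexp_of_isRCP {Q : Measure (∀ i, X i)} [IsProbabilityMeasure Q] {S : Set V}
    {κ : Kernel (∀ j : S, X j) (∀ i, X i)} (hκ : IsRCP Q S κ)
    {t : Set (∀ i, X i)} (ht : MeasurableSet t) :
    Q⟦t | coordσ X S⟧ =ᵐ[Q] fun x => (κ (S.restrict x) t).toReal := by
  haveI := hκ.1
  have hm : coordσ X S ≤ MeasurableSpace.pi := coordσ_le_pi S
  have hgm : Measurable[coordσ X S] fun x => (κ (S.restrict x) t).toReal :=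
    ((κ.measurable_coe ht).comp (measurable_restrict_coordσ S)).ennreal_toReal
  have hgm0 : Measurable fun x => (κ (S.restrict x) t).toReal := hgm.mono hm le_rfl
  have hbd : ∀ x, ‖(κ (S.restrict x) t).toReal‖ ≤ (1 : ℝ) := by
    intro x
    rw [Real.norm_eq_abs, abs_of_nonneg ENNReal.toReal_nonneg]
    exact le_trans (ENNReal.toReal_mono ENNReal.one_ne_top prob_le_one)
      (le_of_eq ENNReal.toReal_one)
  have hgint : Integrable (fun x => (κ (S.restrict x) t).toReal) Q :=
    (integrable_const (1 : ℝ)).mono' hgm0.aestronglyMeasurable (Filter.Eventually.of_forall hbd)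
  refine (ae_eq_condExp_of_forall_setIntegral_eq hm
    ((integrable_const (1 : ℝ)).indicator ht) (fun s _ _ => hgint.integrableOn)
    (fun s hs _ => ?_) (StronglyMeasurable.aestronglyMeasurable hgm.stronglyMeasurable)).symm
  obtain ⟨S', hS', rfl⟩ := hs
  calc ∫ x in S.restrict ⁻¹' S', (κ (S.restrict x) t).toReal ∂Q
      = ∫ y in S', (κ y t).toReal ∂(Q.map S.restrict) :=
        (setIntegral_map hS' ((κ.measurable_coe ht).ennreal_toReal).aestronglyMeasurable
          (Set.measurable_restrict S).aemeasurable).symm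
    _ = (∫⁻ y in S', κ y t ∂(Q.map S.restrict)).toReal :=
        integral_toReal ((κ.measurable_coe ht).aemeasurable)
          (Filter.Eventually.of_forall fun y => lt_of_le_of_lt prob_le_one ENNReal.one_lt_top)
    _ = (Q (t ∩ S.restrict ⁻¹' S')).toReal := by rw [hκ.2 t ht S' hS']
    _ = ∫ x in S.restrict ⁻¹' S', t.indicator (fun _ => (1 : ℝ)) x ∂Q := by
        rw [setIntegral_indicator ht, setIntegral_const, smul_eq_mul, mul_one, Set.inter_comm]
        rfl

/-- Conditional independence of `i` and `k` given `D \ {i}` (with `i ∈ D`) is equivalent to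
the collapse of the conditional expectations given `D` and given `D \ {i}`. -/
lemma CI_iff_condexp_eq {Q : Measure (∀ i, X i)} [IsProbabilityMeasure Q] {i k : V}
    {D : Set V} (hiD : i ∈ D) :
    CI Q {i} {k} (D \ {i}) ↔
      ∀ t : Set (∀ i, X i), MeasurableSet[coordσ X {k}] t →
        Q⟦t | coordσ X D⟧ =ᵐ[Q] Q⟦t | coordσ X (D \ {i})⟧ := by
  have hC0 : coordσ X (D \ {i}) ≤ MeasurableSpace.pi := coordσ_le_pi _
  have hD0 : coordσ X D ≤ MeasurableSpace.pi := coordσ_le_pi _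
  have hk0 : coordσ X {k} ≤ MeasurableSpace.pi := coordσ_le_pi _
  have hi0 : coordσ X {i} ≤ MeasurableSpace.pi := coordσ_le_pi _
  have hCD : coordσ X (D \ {i}) ≤ coordσ X D := coordσ_mono Set.diff_subset
  have hiDle : coordσ X {i} ≤ coordσ X D :=
    coordσ_mono (Set.singleton_subset_iff.mpr hiD)
  have hset : (D \ {i}) ∪ {i} = D := by
    rw [Set.diff_union_self]
    exact Set.union_eq_self_of_subset_right (Set.singleton_subset_iff.mpr hiD)
  have hDeq : coordσ X D = coordσ X (D \ {i}) ⊔ coordσ X {i} := by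
    have h5 := coordσ_union (X := X) (D \ {i}) {i}
    rwa [hset] at h5
  constructor
  · intro hCI t ht
    have ht0 : MeasurableSet t := hk0 _ ht
    have hind_t : Integrable (t.indicator fun _ => (1 : ℝ)) Q :=
      (integrable_const _).indicator ht0
    have hclaim : ∀ v : Set (∀ i, X i), MeasurableSet[coordσ X D] v →
        ∫ x in v, (Q⟦t | coordσ X (D \ {i})⟧) x ∂Q
          = ∫ x in v, t.indicator (fun _ => (1 : ℝ)) x ∂Q := by
      have h_eq : (coordσ X D) = MeasurableSpace.generateFrom
          {v : Set (∀ i, X i) | ∃ s u, MeasurableSet[coordσ X {i}] s ∧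
            MeasurableSet[coordσ X (D \ {i})] u ∧ v = s ∩ u} := by
        refine le_antisymm ?_ (MeasurableSpace.generateFrom_le ?_)
        · rw [hDeq]
          refine sup_le (fun u hu => ?_) (fun s hs => ?_)
          · exact MeasurableSpace.measurableSet_generateFrom
              ⟨Set.univ, u, MeasurableSet.univ, hu, (Set.univ_inter u).symm⟩
          · exact MeasurableSpace.measurableSet_generateFrom
              ⟨s, Set.univ, hs, MeasurableSet.univ, (Set.inter_univ s).symm⟩
        · rintro v ⟨s, u, hs, hu, rfl⟩
          exact (hiDle s hs).inter (hCD u hu)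
      have h_inter : IsPiSystem {v : Set (∀ i, X i) | ∃ s u,
          MeasurableSet[coordσ X {i}] s ∧ MeasurableSet[coordσ X (D \ {i})] u ∧ v = s ∩ u} := by
        rintro v1 ⟨s1, u1, hs1, hu1, rfl⟩ v2 ⟨s2, u2, hs2, hu2, rfl⟩ -
        exact ⟨s1 ∩ s2, u1 ∩ u2, hs1.inter hs2, hu1.inter hu2,
          (Set.inter_inter_inter_comm s1 u1 s2 u2)⟩
      refine MeasurableSpace.induction_on_inter (m := coordσ X D)
        (C := fun v _ => ∫ x in v, (Q⟦t | coordσ X (D \ {i})⟧) x ∂Q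
          = ∫ x in v, t.indicator (fun _ => (1 : ℝ)) x ∂Q) h_eq h_inter ?_ ?_ ?_ ?_
      · simp
      · rintro v ⟨s, u, hs, hu, rfl⟩
        have s0 : MeasurableSet s := hi0 _ hs
        have u0 : MeasurableSet u := hC0 _ hu
        have hind_s : Integrable (s.indicator fun _ => (1 : ℝ)) Q :=
          (integrable_const _).indicator s0
        have hind_s_bd : ∃ C, ∀ x, ‖s.indicator (fun _ => (1 : ℝ)) x‖ ≤ C := by
          refine ⟨1, fun x => ?_⟩
          by_cases hx : x ∈ s <;> simp [hx]
        have hprod_int : Integrable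
            ((s.indicator fun _ => (1 : ℝ)) * Q⟦t | coordσ X (D \ {i})⟧) Q := by
          exact Integrable.bdd_mul (integrable_condExp (μ := Q)
            (f := t.indicator fun _ => (1 : ℝ)) (m := coordσ X (D \ {i})))
            ((stronglyMeasurable_const.indicator s0).aestronglyMeasurable) (Filter.Eventually.of_forall hind_s_bd.choose_spec)
        have hprod_int' : Integrable
            (Q⟦t | coordσ X (D \ {i})⟧ * (s.indicator fun _ => (1 : ℝ))) Q := by
          rwa [mul_comm] at hprod_int
        calc ∫ x in s ∩ u, (Q⟦t | coordσ X (D \ {i})⟧) x ∂Q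
            = ∫ x in u ∩ s, (Q⟦t | coordσ X (D \ {i})⟧) x ∂Q := by rw [Set.inter_comm]
          _ = ∫ x in u, s.indicator (Q⟦t | coordσ X (D \ {i})⟧) x ∂Q :=
              (setIntegral_indicator s0).symm
          _ = ∫ x in u, ((s.indicator fun _ => (1 : ℝ)) * Q⟦t | coordσ X (D \ {i})⟧) x ∂Q := by
              congr 1
              funext x
              by_cases hx : x ∈ s <;> simp [hx]
          _ = ∫ x in u, (Q[(s.indicator fun _ => (1 : ℝ)) * Q⟦t | coordσ X (D \ {i})⟧
                | coordσ X (D \ {i})]) x ∂Q :=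
              (setIntegral_condExp hC0 hprod_int hu).symm
          _ = ∫ x in u, (Q⟦s ∩ t | coordσ X (D \ {i})⟧) x ∂Q := by
              refine setIntegral_congr_ae u0 ?_
              have e1 : Q[(s.indicator fun _ => (1 : ℝ)) * Q⟦t | coordσ X (D \ {i})⟧
                  | coordσ X (D \ {i})]
                  =ᵐ[Q] Q[Q⟦t | coordσ X (D \ {i})⟧ * (s.indicator fun _ => (1 : ℝ))
                  | coordσ X (D \ {i})] := by rw [mul_comm]
              have e2 := condExp_mul_of_stronglyMeasurable_left
                (μ := Q) (m := coordσ X (D \ {i}))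
                (stronglyMeasurable_condExp (f := t.indicator fun _ => (1 : ℝ)))
                hprod_int' hind_s
              have e3 : Q⟦t | coordσ X (D \ {i})⟧ * Q⟦s | coordσ X (D \ {i})⟧
                  =ᵐ[Q] Q⟦s ∩ t | coordσ X (D \ {i})⟧ := by
                have := hCI s t hs ht
                rw [mul_comm] at this
                exact this.symm
              have := (e1.trans e2).trans e3
              exact this.mono fun x hx _ => hx
          _ = ∫ x in u, (s ∩ t).indicator (fun _ => (1 : ℝ)) x ∂Q :=
              setIntegral_condExp hC0 ((integrable_const _).indicator (s0.inter ht0)) hu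
          _ = ∫ x in s ∩ u, t.indicator (fun _ => (1 : ℝ)) x ∂Q := by
              rw [setIntegral_indicator (s0.inter ht0), setIntegral_indicator ht0,
                setIntegral_const, setIntegral_const,
                show u ∩ (s ∩ t) = s ∩ u ∩ t from by
                  ext x; simp only [Set.mem_inter_iff]; tauto]
      · intro v hv hCv
        have hv0 : MeasurableSet v := hD0 _ hv
        have htot := integral_condExp (μ := Q) hC0 (f := t.indicator fun _ => (1 : ℝ))
        have h1 := integral_add_compl hv0 (integrable_condExp
          (f := t.indicator fun _ => (1 : ℝ)) (m := coordσ X (D \ {i})) (μ := Q))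
        have h2 := integral_add_compl hv0 hind_t
        have := htot
        rw [← h1, ← h2] at this
        linarith [hCv, this]
      · intro f hdisj hmeas hC
        have hm0 : ∀ n, MeasurableSet (f n) := fun n => hD0 _ (hmeas n)
        rw [integral_iUnion hm0 hdisj (integrable_condExp.integrableOn),
          integral_iUnion hm0 hdisj (hind_t.integrableOn)]
        exact tsum_congr hC
    exact (ae_eq_condExp_of_forall_setIntegral_eq hD0 hind_t
      (fun s _ _ => integrable_condExp.integrableOn) (fun v hv _ => hclaim v hv)
      (StronglyMeasurable.aestronglyMeasurable (stronglyMeasurable_condExp.mono hCD))).symm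
  · intro h s t hs ht
    have ht0 : MeasurableSet t := hk0 _ ht
    have hs0 : MeasurableSet s := hi0 _ hs
    have hsD : MeasurableSet[coordσ X D] s := hiDle s hs
    have hind_t : Integrable (t.indicator fun _ => (1 : ℝ)) Q :=
      (integrable_const _).indicator ht0
    have hind_s : Integrable (s.indicator fun _ => (1 : ℝ)) Q :=
      (integrable_const _).indicator hs0
    have hind_s_bd : ∃ C, ∀ x, ‖s.indicator (fun _ => (1 : ℝ)) x‖ ≤ C := by
      refine ⟨1, fun x => ?_⟩
      by_cases hx : x ∈ s <;> simp [hx]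
    have hprod_int : Integrable
        ((s.indicator fun _ => (1 : ℝ)) * (t.indicator fun _ => (1 : ℝ))) Q :=
      Integrable.bdd_mul hind_t
        ((stronglyMeasurable_const.indicator hs0).aestronglyMeasurable) (Filter.Eventually.of_forall hind_s_bd.choose_spec)
    have hindeq : (s ∩ t).indicator (fun _ => (1 : ℝ))
        = (s.indicator fun _ => (1 : ℝ)) * (t.indicator fun _ => (1 : ℝ)) := by
      funext x
      by_cases hx : x ∈ s <;> by_cases hx' : x ∈ t <;>
        simp [hx, hx', Set.indicator_apply]
    calc Q⟦s ∩ t | coordσ X (D \ {i})⟧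
        = Q[(s.indicator fun _ => (1 : ℝ)) * (t.indicator fun _ => (1 : ℝ))
            | coordσ X (D \ {i})] := by rw [hindeq]
      _ =ᵐ[Q] Q[Q[(s.indicator fun _ => (1 : ℝ)) * (t.indicator fun _ => (1 : ℝ))
            | coordσ X D] | coordσ X (D \ {i})] := (condExp_condExp_of_le hCD hD0).symm
      _ =ᵐ[Q] Q[(s.indicator fun _ => (1 : ℝ)) * Q⟦t | coordσ X (D \ {i})⟧
            | coordσ X (D \ {i})] := by
          refine condExp_congr_ae ?_
          have e1 := condExp_mul_of_stronglyMeasurable_left (μ := Q) (m := coordσ X D)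
            (stronglyMeasurable_const.indicator hsD) hprod_int hind_t
          refine e1.trans ?_
          exact Filter.EventuallyEq.mul (Filter.EventuallyEq.refl _ _) (h t ht)
      _ =ᵐ[Q] Q⟦t | coordσ X (D \ {i})⟧ * Q⟦s | coordσ X (D \ {i})⟧ := by
          have e2 : (s.indicator fun _ => (1 : ℝ)) * Q⟦t | coordσ X (D \ {i})⟧
              = Q⟦t | coordσ X (D \ {i})⟧ * (s.indicator fun _ => (1 : ℝ)) := mul_comm _ _
          rw [e2]
          refine condExp_mul_of_stronglyMeasurable_left stronglyMeasurable_condExp ?_ hind_s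
          rw [← e2]
          exact Integrable.bdd_mul integrable_condExp
            ((stronglyMeasurable_const.indicator hs0).aestronglyMeasurable) (Filter.Eventually.of_forall hind_s_bd.choose_spec)
      _ = Q⟦s | coordσ X (D \ {i})⟧ * Q⟦t | coordσ X (D \ {i})⟧ := mul_comm _ _

/-- Conditional independence is equivalent to the existence of a version of the conditional
distribution of `k` given `D` that is measurable with respect to `D \ {i}`. -/
lemma CI_iff_exists_version {Q : Measure (∀ i, X i)} [IsProbabilityMeasure Q] {i k : V}
    {D : Set V} (hiD : i ∈ D) {F : Set (∀ i, X i) → (∀ i, X i) → ℝ}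
    (hFver : ∀ t, MeasurableSet[coordσ X {k}] t → Q⟦t | coordσ X D⟧ =ᵐ[Q] F t)
    (hFint : ∀ t, MeasurableSet[coordσ X {k}] t → Integrable (F t) Q) :
    CI Q {i} {k} (D \ {i}) ↔
      ∀ t, MeasurableSet[coordσ X {k}] t →
        ∃ h, StronglyMeasurable[coordσ X (D \ {i})] h ∧ F t =ᵐ[Q] h := by
  rw [CI_iff_condexp_eq hiD]
  refine forall₂_congr fun t ht => ?_
  constructor
  · intro hyp
    exact ⟨Q⟦t | coordσ X (D \ {i})⟧, stronglyMeasurable_condExp,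
      (hFver t ht).symm.trans hyp⟩
  · rintro ⟨h, hsm, hfh⟩
    have h3 : Q[h | coordσ X (D \ {i})] = h :=
      condExp_of_stronglyMeasurable (coordσ_le_pi _) hsm ((hFint t ht).congr hfh)
    have h1 : Q⟦t | coordσ X (D \ {i})⟧ =ᵐ[Q] h := by
      calc Q⟦t | coordσ X (D \ {i})⟧
          =ᵐ[Q] Q[Q⟦t | coordσ X D⟧ | coordσ X (D \ {i})] :=
            (condExp_condExp_of_le (coordσ_mono Set.diff_subset) (coordσ_le_pi D)).symm
        _ =ᵐ[Q] Q[F t | coordσ X (D \ {i})] := condExp_congr_ae (hFver t ht)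
        _ =ᵐ[Q] Q[h | coordσ X (D \ {i})] := condExp_congr_ae hfh
        _ = h := h3
    exact ((hFver t ht).trans hfh).trans h1.symm

/-- Transfer of almost-everywhere equality of `coordσ X D`-measurable functions along absolute
continuity of the marginals on `D`. -/
lemma eventuallyEq_transfer {Q1 Q2 : Measure (∀ i, X i)} {D : Set V}
    (hac : Q1.map (D.restrict (π := X)) ≪ Q2.map (D.restrict (π := X)))
    {f h : (∀ i, X i) → ℝ} (hf : Measurable[coordσ X D] f) (hh : Measurable[coordσ X D] h)
    (he : f =ᵐ[Q2] h) : f =ᵐ[Q1] h := by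
  have hN : MeasurableSet[coordσ X D] {x | ¬ f x = h x} :=
    (measurableSet_eq_fun hf hh).compl
  obtain ⟨S', hS', hpre⟩ := hN
  have k1 : Q1 {x | ¬ f x = h x} = (Q1.map (D.restrict (π := X))) S' := by
    rw [Measure.map_apply (f := D.restrict (π := X)) (Set.measurable_restrict D) hS', hpre]
  have k2 : Q2 {x | ¬ f x = h x} = (Q2.map (D.restrict (π := X))) S' := by
    rw [Measure.map_apply (f := D.restrict (π := X)) (Set.measurable_restrict D) hS', hpre]
  have h2 : (Q2.map (D.restrict (π := X))) S' = 0 := by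
    rw [← k2]
    exact ae_iff.mp he
  rw [Filter.EventuallyEq, ae_iff]
  rw [show {x | ¬ f x = h x} = {x | ¬ f x = h x} from rfl] at k1
  rw [k1]
  exact hac h2

end Stmt14Aux


section Statements


variable [Fintype V]

/-- For a quantifiable interventional family with underlying distribution `P`
and directed ancestral causal graph, for `i ∈ cause(k)`:
`i ⊥_{P_do(i)} k | cause(k)\{i}` iff `i ⊥_P k | cause(k)\{i}`. -/
theorem stmt14 (Pdo : V → Measure (∀ i, X i))
    (hprob : ∀ i, IsProbabilityMeasure (Pdo i))
    (P : Measure (∀ i, X i)) (hP : IsProbabilityMeasure P)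
    (hq : Quantifiable Pdo P) (hanc : (Gcausal Pdo).DirectedAncestral)
    (k i : V) (hi : i ∈ cause Pdo k) :
    CI (Pdo i) {i} {k} (cause Pdo k \ {i}) ↔ CI P {i} {k} (cause Pdo k \ {i}) := by
  have hik : i ≠ k := hi.1
  obtain ⟨hcompat, hq2⟩ := hq
  obtain ⟨κ₁, κ₂, hκ₁, hκ₂, hker⟩ := hq2 i k hik
  haveI := hprob i
  haveI := hκ₂.1
  have hins : insert i (cause Pdo k) = cause Pdo k := Set.insert_eq_self.mpr hi
  have hk0 : coordσ X {k} ≤ MeasurableSpace.pi := coordσ_le_pi _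
  set F : Set (∀ i, X i) → (∀ i, X i) → ℝ :=
    fun t x => (κ₂ ((cause Pdo k).restrict x) t).toReal with hF
  have hFmeas : ∀ t : Set (∀ i, X i), MeasurableSet t →
      Measurable[coordσ X (cause Pdo k)] (F t) := fun t ht =>
    ((κ₂.measurable_coe ht).comp (measurable_restrict_coordσ _)).ennreal_toReal
  have hFbd : ∀ t x, ‖F t x‖ ≤ (1 : ℝ) := by
    intro t x
    rw [hF, Real.norm_eq_abs, abs_of_nonneg ENNReal.toReal_nonneg]
    exact le_trans (ENNReal.toReal_mono ENNReal.one_ne_top prob_le_one)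
      (le_of_eq ENNReal.toReal_one)
  have hFint : ∀ (Q : Measure (∀ i, X i)), IsProbabilityMeasure Q →
      ∀ t : Set (∀ i, X i), MeasurableSet t → Integrable (F t) Q := by
    intro Q hQ t ht
    haveI := hQ
    exact (integrable_const (1 : ℝ)).mono'
      ((hFmeas t ht).mono (coordσ_le_pi _) le_rfl).aestronglyMeasurable
      (Filter.Eventually.of_forall (hFbd t))
  -- the version property for `P`
  have hPver : ∀ t, MeasurableSet[coordσ X {k}] t →
      P⟦t | coordσ X (cause Pdo k)⟧ =ᵐ[P] F t :=
    fun t ht => condexp_of_isRCP hκ₂ (hk0 _ ht)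
  -- the version property for `Pdo i`
  have hDver : ∀ t, MeasurableSet[coordσ X {k}] t →
      (Pdo i)⟦t | coordσ X (cause Pdo k)⟧ =ᵐ[Pdo i] F t := by
    intro t ht
    have ht' := ht
    rw [coordσ_singleton] at ht'
    obtain ⟨t₀, ht₀, rfl⟩ := ht'
    have hta : MeasurableSet ((fun z : ∀ i, X i => z k) ⁻¹' t₀) :=
      measurable_pi_apply k ht₀
    have h1 := condexp_of_isRCP hκ₁ hta
    have h2 : (fun x => (κ₁ ((insert i (cause Pdo k)).restrict x)
        ((fun z : ∀ i, X i => z k) ⁻¹' t₀)).toReal)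
        = F ((fun z : ∀ i, X i => z k) ⁻¹' t₀) := by
      funext x
      have e1 : κ₁ ((insert i (cause Pdo k)).restrict x) ((fun z : ∀ i, X i => z k) ⁻¹' t₀)
          = κ₂ ((cause Pdo k).restrict x) ((fun z : ∀ i, X i => z k) ⁻¹' t₀) := by
        calc κ₁ ((insert i (cause Pdo k)).restrict x) ((fun z : ∀ i, X i => z k) ⁻¹' t₀)
            = ((κ₁ ((insert i (cause Pdo k)).restrict x)).map fun z => z k) t₀ := by
              rw [Measure.map_apply (measurable_pi_apply k) ht₀]
          _ = ((κ₂ (Set.restrict₂ (Set.subset_insert i (cause Pdo k))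
                ((insert i (cause Pdo k)).restrict x))).map fun z => z k) t₀ := by
              rw [hker ((insert i (cause Pdo k)).restrict x)]
          _ = κ₂ (Set.restrict₂ (Set.subset_insert i (cause Pdo k))
                ((insert i (cause Pdo k)).restrict x)) ((fun z : ∀ i, X i => z k) ⁻¹' t₀) := by
              rw [Measure.map_apply (measurable_pi_apply k) ht₀]
          _ = κ₂ ((cause Pdo k).restrict x) ((fun z : ∀ i, X i => z k) ⁻¹' t₀) := rfl
      rw [hF, e1]
    rw [h2] at h1
    have h4 : coordσ X (insert i (cause Pdo k)) = coordσ X (cause Pdo k) := by rw [hins]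
    rw [h4] at h1
    exact h1
  -- absolute continuity of the marginals on `cause Pdo k`
  have hsub : cause Pdo k ⊆ insert k (cause Pdo k) := Set.subset_insert _ _
  have hmapeq : ∀ Q : Measure (∀ i, X i), Q.map ((cause Pdo k).restrict (π := X))
      = (Q.map ((insert k (cause Pdo k)).restrict (π := X))).map (Set.restrict₂ hsub) := by
    intro Q
    rw [Measure.map_map (g := Set.restrict₂ (π := X) hsub) (f := (insert k (cause Pdo k)).restrict (π := X))
      (Set.measurable_restrict₂ hsub) (Set.measurable_restrict _)]
    rfl
  have hcompat' := hcompat i k hik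
  have hac1 : (Pdo i).map ((cause Pdo k).restrict (π := X))
      ≪ P.map ((cause Pdo k).restrict (π := X)) := by
    rw [hmapeq, hmapeq]
    exact hcompat'.1.map (Set.measurable_restrict₂ hsub)
  have hac2 : P.map ((cause Pdo k).restrict (π := X))
      ≪ (Pdo i).map ((cause Pdo k).restrict (π := X)) := by
    rw [hmapeq, hmapeq]
    exact hcompat'.2.map (Set.measurable_restrict₂ hsub)
  rw [CI_iff_exists_version hi hDver (fun t ht => hFint _ (hprob i) t (hk0 _ ht)),
    CI_iff_exists_version hi hPver (fun t ht => hFint _ hP t (hk0 _ ht))]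
  constructor
  · intro H t ht
    obtain ⟨h, hsm, hfh⟩ := H t ht
    exact ⟨h, hsm, eventuallyEq_transfer hac2 (hFmeas t (hk0 _ ht))
      ((hsm.measurable).mono (coordσ_mono Set.diff_subset) le_rfl) hfh⟩
  · intro H t ht
    obtain ⟨h, hsm, hfh⟩ := H t ht
    exact ⟨h, hsm, eventuallyEq_transfer hac1 (hFmeas t (hk0 _ ht))
      ((hsm.measurable).mono (coordσ_mono Set.diff_subset) le_rfl) hfh⟩


end Statements

end CausalAxioms
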